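/- Let κ be an infinite cardinal, let G be a connected κ-regular graph, and let T' be any family of κ forests without isolated vertices, each of order at most κ. Then T' packs into G, i.e., there exist pairwise edge-disjoint subgraphs of G, one isomorphic to each forest in T'. -/

import Mathlib

open Cardinal

universe u

/-- `G` is `κ`-regular: every vertex has degree (neighbourhood cardinality) exactly `κ`. -/
def SimpleGraph.CardRegular {V : Type u} (G : SimpleGraph V) (κ : Cardinal.{u}) : Prop :=
  ∀ v : V, #(G.neighborSet v) = κ

/-- `G` has no isolated vertices. -/
def SimpleGraph.NoIsolatedVerts {V : Type u} (G : SimpleGraph V) : Prop :=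
  ∀ v : V, ∃ w : V, G.Adj v w

/-- A factorization of `G`: a family of spanning subgraphs, pairwise edge-disjoint,
whose edge sets cover `E(G)`. -/
def SimpleGraph.IsFactorization {V : Type u} {ι : Type u} (G : SimpleGraph V)
    (F : ι → SimpleGraph V) : Prop :=
  (∀ i, F i ≤ G) ∧ (Pairwise fun i j => Disjoint (F i).edgeSet (F j).edgeSet) ∧
    (⋃ i, (F i).edgeSet) = G.edgeSet

/-- In the forest `F` rooted at `v₀`, `u` is a child of `w`. -/
def SimpleGraph.IsChild {V : Type u} (F : SimpleGraph V) (v₀ u w : V) : Prop :=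
  F.Adj w u ∧ F.Reachable v₀ u ∧ F.dist v₀ u = F.dist v₀ w + 1

/-- The graph with edges `v_j v_i` for `v_i ∈ C j`, `j < i`. -/
def childGraph {V I : Type u} [LT I] (v : I ≃ V) (C : I → Set V) : SimpleGraph V :=
  SimpleGraph.fromEdgeSet {e | ∃ i j : I, j < i ∧ (v i : V) ∈ C j ∧ e = s(v j, v i)}

/-- Disjoint union of `ι`-many copies of `T`. -/
def copiesGraph (ι : Type u) {W : Type u} (T : SimpleGraph W) : SimpleGraph (ι × W) where
  Adj p q := p.1 = q.1 ∧ T.Adj p.2 q.2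
  symm := ⟨by rintro p q ⟨h1, h2⟩; exact ⟨h1.symm, h2.symm⟩⟩
  loopless := ⟨by rintro p ⟨-, h⟩; exact T.loopless.irrefl _ h⟩

namespace PackAux

open SimpleGraph

/-! ### Per-forest structure: roots, canonical paths, depth, parents -/

section Forest

variable {X : Type u} (H : SimpleGraph X)

noncomputable def rt (a : X) : X := (H.connectedComponentMk a).out

lemma reachable_rt (a : X) : H.Reachable (rt H a) a :=
  SimpleGraph.ConnectedComponent.eq.mp (Quot.out_eq _)

noncomputable def pathTo (a : X) : H.Path (rt H a) a := by
  classical exact ((reachable_rt H a).some).toPath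

noncomputable def depth (a : X) : ℕ := (pathTo H a).1.length

lemma rt_eq_of_adj {a b : X} (h : H.Adj a b) : rt H a = rt H b := by
  unfold rt
  rw [SimpleGraph.ConnectedComponent.eq.mpr h.reachable]

lemma isPath_concat {a b c : X} {p : H.Walk a b} (hp : p.IsPath) (h : H.Adj b c)
    (hc : c ∉ p.support) : (p.concat h).IsPath := by
  rw [Walk.isPath_def, Walk.support_concat, List.nodup_append']
  exact ⟨hp.support_nodup, List.nodup_singleton c, by
    intro x hx hx'
    rw [List.mem_singleton] at hx'
    exact hc (hx' ▸ hx)⟩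

lemma struct (hH : H.IsAcyclic) {a b : X} (h : H.Adj a b) :
    (pathTo H b).1.support = (pathTo H a).1.support ++ [b] ∨
    (pathTo H a).1.support = (pathTo H b).1.support ++ [a] := by
  classical
  have hr : rt H a = rt H b := rt_eq_of_adj H h
  by_cases hb : b ∈ (pathTo H a).1.support
  · right
    have hq : ((pathTo H a).1.takeUntil b hb).IsPath := (pathTo H a).2.takeUntil hb
    have hna : a ∉ ((pathTo H a).1.takeUntil b hb).support := by
      intro hmem
      have hnd := (pathTo H a).2.support_nodup
      have hsupp : (pathTo H a).1.support =
          ((pathTo H a).1.takeUntil b hb).support ++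
            ((pathTo H a).1.dropUntil b hb).support.tail := by
        rw [← Walk.support_append, Walk.take_spec]
      rw [hsupp] at hnd
      have hdisj := List.disjoint_of_nodup_append hnd
      have ha2 : a ∈ ((pathTo H a).1.dropUntil b hb).support := Walk.end_mem_support _
      have hnt : a ∉ ((pathTo H a).1.dropUntil b hb).support.tail := fun hx => hdisj hmem hx
      rw [Walk.support_eq_cons] at ha2
      rcases List.mem_cons.mp ha2 with h1 | h1
      · exact h.ne h1
      · exact hnt h1
    have hPb : pathTo H b = ⟨((pathTo H a).1.takeUntil b hb).copy hr rfl,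
        by rw [Walk.isPath_copy]; exact hq⟩ := hH.path_unique _ _
    have hPa : pathTo H a = ⟨((pathTo H a).1.takeUntil b hb).concat h.symm,
        isPath_concat H hq h.symm hna⟩ := hH.path_unique _ _
    have e1 := congrArg (fun q : H.Path (rt H a) a => q.1.support) hPa
    have e2 := congrArg (fun q : H.Path (rt H b) b => q.1.support) hPb
    simp only [Walk.support_concat, Walk.support_copy, List.concat_eq_append] at e1 e2
    rw [e1, e2]
  · left
    have hq : ((pathTo H a).1.concat h).IsPath :=
      isPath_concat H (pathTo H a).2 h hb
    have hPb : pathTo H b = ⟨((pathTo H a).1.concat h).copy hr rfl,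
        by rw [Walk.isPath_copy]; exact hq⟩ := hH.path_unique _ _
    have e2 := congrArg (fun q : H.Path (rt H b) b => q.1.support) hPb
    simp only [Walk.support_concat, Walk.support_copy, List.concat_eq_append] at e2
    rw [e2]

lemma depth_succ {a b : X} (h : (pathTo H b).1.support = (pathTo H a).1.support ++ [b]) :
    depth H b = depth H a + 1 := by
  have := congrArg List.length h
  simp only [List.length_append, Walk.length_support, List.length_singleton] at this
  unfold depth
  omega

lemma exists_parent (hH : H.IsAcyclic) {a : X} (h : 0 < depth H a) :
    ∃ b, H.Adj b a ∧ (pathTo H a).1.support = (pathTo H b).1.support ++ [a] := by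
  classical
  have hnil : ¬ (pathTo H a).1.reverse.Nil := by
    rw [Walk.nil_iff_length_eq, Walk.length_reverse]
    unfold depth at h
    omega
  obtain ⟨z, hadj, q, hq⟩ := Walk.not_nil_iff.mp hnil
  have hz : z ∈ (pathTo H a).1.support := by
    have : z ∈ (pathTo H a).1.reverse.support := by
      rw [hq, Walk.support_cons]
      exact List.mem_cons_of_mem _ (Walk.start_mem_support q)
    rwa [Walk.support_reverse, List.mem_reverse] at this
  rcases struct H hH hadj with hc | hc
  · exfalso
    have hnd := (pathTo H z).2.support_nodup
    rw [hc] at hnd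
    exact (List.disjoint_of_nodup_append hnd) hz (List.mem_singleton_self z)
  · exact ⟨z, hadj.symm, hc⟩

lemma parent_eq {a b b' : X}
    (h1 : (pathTo H a).1.support = (pathTo H b).1.support ++ [a])
    (h2 : (pathTo H a).1.support = (pathTo H b').1.support ++ [a]) : b = b' := by
  have h3 : (pathTo H b).1.support = (pathTo H b').1.support :=
    List.append_cancel_right (h1.symm.trans h2)
  have g1 : (pathTo H b).1.support.getLast? = some b := by
    rw [List.getLast?_eq_getLast (Walk.support_ne_nil _), Walk.getLast_support]
  have g2 : (pathTo H b').1.support.getLast? = some b' := by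
    rw [List.getLast?_eq_getLast (Walk.support_ne_nil _), Walk.getLast_support]
  rw [h3, g2] at g1
  exact (Option.some_injective _ g1).symm

section Rho

variable {Y : Type u} [LinearOrder Y]

lemma le_foldr_max (l : List Y) (i : Y) : i ≤ l.foldr max i := by
  induction l with
  | nil => exact le_rfl
  | cons x l ih => exact ih.trans (le_max_right x _)

lemma mem_le_foldr_max {x : Y} {l : List Y} (i : Y) (hx : x ∈ l) : x ≤ l.foldr max i := by
  induction l with
  | nil => simp at hx
  | cons y l ih =>
    rcases List.mem_cons.mp hx with rfl | hmem
    · exact le_max_left _ _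
    · exact (ih hmem).trans (le_max_right _ _)

lemma foldr_max_le {l : List Y} {i c : Y} (hi : i ≤ c) (hl : ∀ x ∈ l, x ≤ c) :
    l.foldr max i ≤ c := by
  induction l with
  | nil => exact hi
  | cons x l ih =>
    exact max_le (hl x (List.mem_cons_self)) (ih fun y hy => hl y (List.mem_cons_of_mem _ hy))

noncomputable def rho (j : X → Y) (a : X) : Y :=
  ((pathTo H a).1.support.map j).foldr max (j a)

lemma self_le_rho (j : X → Y) (a : X) : j a ≤ rho H j a := le_foldr_max _ _

lemma mem_le_rho (j : X → Y) {x a : X} (hx : x ∈ (pathTo H a).1.support) :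
    j x ≤ rho H j a :=
  mem_le_foldr_max _ (List.mem_map_of_mem (f := j) hx)

lemma rho_mono (j : X → Y) {a b : X}
    (h : (pathTo H a).1.support = (pathTo H b).1.support ++ [a]) :
    rho H j b ≤ rho H j a := by
  have hsub : ∀ x ∈ (pathTo H b).1.support, x ∈ (pathTo H a).1.support := by
    intro x hx; rw [h]; exact List.mem_append_left _ hx
  apply foldr_max_le
  · exact mem_le_rho H j (hsub b (Walk.end_mem_support _))
  · intro y hy
    obtain ⟨x, hx, rfl⟩ := List.mem_map.mp hy
    exact mem_le_rho H j (hsub x hx)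

end Rho

end Forest

/-! ### Greedy embedding by well-founded recursion -/

lemma exists_embed {V : Type u} (G : SimpleGraph V) (κ : Cardinal.{u})
    (hreg : ∀ v, κ ≤ #(G.neighborSet v)) (hV : κ ≤ #V)
    {U : Type u} (rel : U → U → Prop) (wfr : WellFounded rel)
    (hsmall : ∀ u, #{u' : U // rel u' u} < κ)
    (Dp : U → ℕ) (Par : ∀ u, 0 < Dp u → U) (hpar : ∀ u h, rel (Par u h) u) :
    ∃ f : U → V, (∀ u u', rel u' u → f u' ≠ f u) ∧
      (∀ u (h : 0 < Dp u), G.Adj (f (Par u h)) (f u)) := by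
  classical
  have key : ∀ (u : U) (g : ∀ u', rel u' u → V) (A : Set V), κ ≤ #A →
      ∃ v, v ∈ A ∧ ∀ u' (h : rel u' u), g u' h ≠ v := by
    intro u g A hA
    by_contra hcon
    push_neg at hcon
    have hsub : A ⊆ Set.range (fun p : {u' // rel u' u} => g p.1 p.2) := by
      intro v hv
      obtain ⟨u', h', he⟩ := hcon v hv
      exact ⟨⟨u', h'⟩, he⟩
    have h1 : κ ≤ #{u' // rel u' u} :=
      (hA.trans (mk_le_mk_of_subset hsub)).trans mk_range_le
    exact absurd h1 (hsmall u).not_ge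
  let step : ∀ u : U, (∀ u', rel u' u → V) → V := fun u g =>
    if h : 0 < Dp u then
      (key u g (G.neighborSet (g (Par u h) (hpar u h))) (hreg _)).choose
    else (key u g Set.univ (by rw [mk_univ]; exact hV)).choose
  let f : U → V := wfr.fix step
  have hfix : ∀ u, f u = step u (fun u' _ => f u') := fun u => wfr.fix_eq step u
  have main : ∀ u, (∀ u' (h : rel u' u), f u' ≠ f u) ∧
      (∀ h : 0 < Dp u, G.Adj (f (Par u h)) (f u)) := by
    intro u
    by_cases h : 0 < Dp u
    · have he : f u = (key u (fun u' _ => f u')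
          (G.neighborSet (f (Par u h))) (hreg _)).choose := by
        rw [hfix u]
        exact dif_pos h
      obtain ⟨hm, hne⟩ := (key u (fun u' _ => f u')
          (G.neighborSet (f (Par u h))) (hreg _)).choose_spec
      constructor
      · intro u' h'
        rw [he]
        exact hne u' h'
      · intro h'
        have : Par u h' = Par u h := by congr
        rw [this, ← he] at *
        rw [he]
        exact hm
    · have he : f u = (key u (fun u' _ => f u') Set.univ
          (by rw [mk_univ]; exact hV)).choose := by
        rw [hfix u]
        exact dif_neg h
      obtain ⟨hm, hne⟩ := (key u (fun u' _ => f u') Set.univ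
          (by rw [mk_univ]; exact hV)).choose_spec
      exact ⟨fun u' h' => by rw [he]; exact hne u' h', fun h' => absurd h' h⟩
  exact ⟨f, fun u u' h => (main u).1 u' h, fun u h => (main u).2 h⟩

/-! ### The global rank ordering on the disjoint union -/

section Global

variable {I : Type u} {W : I → Type u} (T : ∀ i, SimpleGraph (W i))
  {Y : Type u} [LinearOrder Y] (j : (Σ i, W i) → Y)

noncomputable def Dep (u : Σ i, W i) : ℕ := depth (T u.1) u.2

noncomputable def Rho (u : Σ i, W i) : Y := rho (T u.1) (fun x => j ⟨u.1, x⟩) u.2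

noncomputable def M (u : Σ i, W i) : Y ×ₗ (ℕ ×ₗ Y) :=
  toLex (Rho T j u, toLex (Dep T u, j u))

def relU (u' u : Σ i, W i) : Prop := M T j u' < M T j u

lemma relU_wf [WellFoundedLT Y] : WellFounded (relU T j) :=
  InvImage.wf (M T j) (wellFounded_lt)

lemma relU_bound {u' u : Σ i, W i} (h : relU T j u' u) : j u' ≤ Rho T j u := by
  have h1 : Rho T j u' ≤ Rho T j u := by
    rcases (Prod.Lex.lt_iff).mp h with h2 | h2
    · exact h2.le
    · exact h2.1.le
  exact (self_le_rho (T u'.1) _ u'.2).trans h1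

lemma relU_total (hj : Function.Injective j) (u' u : Σ i, W i) :
    u' = u ∨ relU T j u' u ∨ relU T j u u' := by
  rcases lt_trichotomy (M T j u') (M T j u) with h | h | h
  · exact Or.inr (Or.inl h)
  · left
    apply hj
    have h1 := (toLex_inj.mp h)
    have h2 := congrArg Prod.snd h1
    have h3 := (toLex_inj.mp h2)
    exact congrArg Prod.snd h3
  · exact Or.inr (Or.inr h)

noncomputable def Par (hac : ∀ i, (T i).IsAcyclic) (u : Σ i, W i) (h : 0 < Dep T u) :
    Σ i, W i :=
  ⟨u.1, (exists_parent (T u.1) (hac u.1) h).choose⟩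

lemma Par_spec (hac : ∀ i, (T i).IsAcyclic) (u : Σ i, W i) (h : 0 < Dep T u) :
    (T u.1).Adj (exists_parent (T u.1) (hac u.1) h).choose u.2 ∧
      (pathTo (T u.1) u.2).1.support =
        (pathTo (T u.1) (exists_parent (T u.1) (hac u.1) h).choose).1.support ++ [u.2] :=
  (exists_parent (T u.1) (hac u.1) h).choose_spec

lemma relU_Par (hac : ∀ i, (T i).IsAcyclic) (u : Σ i, W i) (h : 0 < Dep T u) :
    relU T j (Par T hac u h) u := by
  have hs := (Par_spec T hac u h).2
  have hd : Dep T u = Dep T (Par T hac u h) + 1 := depth_succ (T u.1) hs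
  have hr : Rho T j (Par T hac u h) ≤ Rho T j u := rho_mono (T u.1) _ hs
  unfold relU M
  rcases hr.lt_or_eq with h1 | h1
  · exact (Prod.Lex.lt_iff).mpr (Or.inl h1)
  · refine (Prod.Lex.lt_iff).mpr (Or.inr ⟨h1, ?_⟩)
    exact (Prod.Lex.lt_iff).mpr (Or.inl (by simp only [ofLex_toLex]; omega))

end Global

end PackAux


/-- Every family of `κ` forests without isolated vertices, each of order at most `κ`,
packs into every connected `κ`-regular graph. -/
theorem stmt_9 (κ : Cardinal.{u}) (hκ : ℵ₀ ≤ κ) {V : Type u} (G : SimpleGraph V)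
    (hconn : G.Connected) (hreg : G.CardRegular κ)
    (W : κ.ord.ToType → Type u) (T : ∀ i, SimpleGraph (W i))
    (hac : ∀ i, (T i).IsAcyclic) (hni : ∀ i, (T i).NoIsolatedVerts)
    (hord : ∀ i, #(W i) ≤ κ) :
    ∃ F : κ.ord.ToType → G.Subgraph,
      (Pairwise fun i j => Disjoint (F i).edgeSet (F j).edgeSet) ∧
      ∀ i, Nonempty ((F i).coe ≃g T i) := by
  classical
  have hUle : #((i : κ.ord.ToType) × W i) ≤ #(κ.ord.ToType) := by
    rw [mk_ord_toType, mk_sigma]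
    calc (Cardinal.sum fun i => #(W i)) ≤ Cardinal.sum (fun _ : κ.ord.ToType => κ) :=
          Cardinal.sum_le_sum _ _ hord
      _ = #(κ.ord.ToType) * κ := Cardinal.sum_const' _ _
      _ = κ := by rw [mk_ord_toType]; exact mul_eq_self hκ
  obtain ⟨j⟩ := (Cardinal.le_def _ _).mp hUle
  have hV : κ ≤ #V := by
    obtain ⟨v⟩ := hconn.nonempty
    rw [← hreg v]
    exact mk_set_le _
  have hsmall : ∀ u, #{u' // PackAux.relU T (⇑j) u' u} < κ := by
    intro u
    have hinj2 : Function.Injective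
        (fun p : {u' // PackAux.relU T (⇑j) u' u} =>
          (⟨j p.1, PackAux.relU_bound T (⇑j) p.2⟩ :
            Set.Iic (PackAux.Rho T (⇑j) u))) := by
      intro p q hpq
      apply Subtype.ext
      apply j.injective
      simpa using congrArg Subtype.val hpq
    refine (mk_le_of_injective hinj2).trans_lt ?_
    have h1 : #(Set.Iio (PackAux.Rho T (⇑j) u)) < κ := mk_Iio_ord_toType _
    have h2 : #(Set.Iic (PackAux.Rho T (⇑j) u)) ≤
        #(Set.Iio (PackAux.Rho T (⇑j) u)) + 1 := by
      rw [← Set.Iio_union_right]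
      refine (mk_union_le _ _).trans ?_
      simp
    exact h2.trans_lt (add_lt_of_lt hκ h1 (one_lt_aleph0.trans_le hκ))
  obtain ⟨f, hnew, hadj⟩ := PackAux.exists_embed G κ (fun v => (hreg v).ge) hV
    (PackAux.relU T (⇑j)) (PackAux.relU_wf T (⇑j)) hsmall (PackAux.Dep T)
    (PackAux.Par T hac) (PackAux.relU_Par T (⇑j) hac)
  have hinj : Function.Injective f := by
    intro u u' he
    rcases PackAux.relU_total T (⇑j) j.injective u u' with h | h | h
    · exact h
    · exact absurd he (hnew u' u h)
    · exact absurd he.symm (hnew u u' h)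
  have hhom : ∀ (i : κ.ord.ToType) (a b : W i), (T i).Adj a b →
      G.Adj (f ⟨i, a⟩) (f ⟨i, b⟩) := by
    have key : ∀ (i : κ.ord.ToType) (a b : W i), (T i).Adj a b →
        (PackAux.pathTo (T i) b).1.support =
          (PackAux.pathTo (T i) a).1.support ++ [b] →
        G.Adj (f ⟨i, a⟩) (f ⟨i, b⟩) := by
      intro i a b hab hsupp
      have hd : PackAux.depth (T i) b = PackAux.depth (T i) a + 1 :=
        PackAux.depth_succ (T i) hsupp
      have hpos : 0 < PackAux.Dep T ⟨i, b⟩ := by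
        show 0 < PackAux.depth (T i) b
        omega
      have hc : (PackAux.exists_parent (T i) (hac i) hpos).choose = a :=
        PackAux.parent_eq (T i) (PackAux.Par_spec T hac ⟨i, b⟩ hpos).2 hsupp
      have hP : PackAux.Par T hac ⟨i, b⟩ hpos = ⟨i, a⟩ := by
        show (⟨i, (PackAux.exists_parent (T i) (hac i) hpos).choose⟩ : Σ i, W i) = ⟨i, a⟩
        rw [hc]
      have h2 := hadj ⟨i, b⟩ hpos
      rwa [hP] at h2
    intro i a b hab
    rcases PackAux.struct (T i) (hac i) hab with hc | hc
    · exact key i a b hab hc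
    · exact (key i b a hab.symm hc).symm
  refine ⟨fun i =>
    { verts := Set.range fun a => f ⟨i, a⟩
      Adj := fun x y => ∃ a b, (T i).Adj a b ∧ f ⟨i, a⟩ = x ∧ f ⟨i, b⟩ = y
      adj_sub := by rintro x y ⟨a, b, hab, rfl, rfl⟩; exact hhom i a b hab
      edge_vert := by rintro x y ⟨a, b, hab, rfl, rfl⟩; exact ⟨a, rfl⟩
      symm := ⟨by rintro x y ⟨a, b, hab, rfl, rfl⟩; exact ⟨b, a, hab.symm, rfl, rfl⟩⟩ },
    ?_, ?_⟩
  · intro i i' hne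
    rw [Set.disjoint_left]
    intro e
    induction e using Sym2.ind with
    | _ x y =>
      intro he1 he2
      rw [SimpleGraph.Subgraph.mem_edgeSet] at he1 he2
      obtain ⟨a, b, hab, hfa, hfb⟩ := he1
      obtain ⟨c, d, hcd, hfc, hfd⟩ := he2
      apply hne
      have h3 : (⟨i, a⟩ : Σ i, W i) = ⟨i', c⟩ := hinj (hfa.trans hfc.symm)
      exact congrArg Sigma.fst h3
  · intro i
    refine ⟨?_⟩
    have hbij : Function.Bijective (fun a : W i =>
        (⟨f ⟨i, a⟩, ⟨a, rfl⟩⟩ : (Set.range fun a : W i => f ⟨i, a⟩))) := by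
      constructor
      · intro a b hab
        exact sigma_mk_injective (hinj (congrArg Subtype.val hab))
      · rintro ⟨x, a, rfl⟩
        exact ⟨a, rfl⟩
    refine SimpleGraph.Iso.symm ⟨Equiv.ofBijective _ hbij, ?_⟩
    intro a b
    show (∃ c d, (T i).Adj c d ∧ f ⟨i, c⟩ = f ⟨i, a⟩ ∧ f ⟨i, d⟩ = f ⟨i, b⟩) ↔ (T i).Adj a b
    constructor
    · rintro ⟨c, d, hcd, hc, hd⟩
      have hca : c = a := sigma_mk_injective (hinj hc)
      have hdb : d = b := sigma_mk_injective (hinj hd)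
      rwa [hca, hdb] at hcd
    · intro h
      exact ⟨a, b, h, rfl, rfl⟩
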